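/- Let K be a field of characteristic p > 2 and m, n positive integers, R = K[A,B,C,D,T]/I as above, and P = (a, b, c, d) ⊆ R. Then R_P is isomorphic to the localization of the hypersurface K[T,A,B,C]/(A²(A² + T^m) - BC) at the prime (a, b, c); in particular d = b^n(a² + t^m)/(c + a² + t^m) in R_P. -/

import Mathlib

open MvPolynomial

@[simp] lemma vec4_two {α : Type*} (x y z w : α) : ![x,y,z,w] 2 = z := rfl
@[simp] lemma vec4_three {α : Type*} (x y z w : α) : ![x,y,z,w] 3 = w := rfl
@[simp] lemma vec5_two {α : Type*} (x y z w v : α) : ![x,y,z,w,v] 2 = z := rfl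
@[simp] lemma vec5_three {α : Type*} (x y z w v : α) : ![x,y,z,w,v] 3 = w := rfl
@[simp] lemma vec5_four {α : Type*} (x y z w v : α) : ![x,y,z,w,v] 4 = v := rfl

noncomputable def psi4 (K : Type) [CommRing K] : MvPolynomial (Fin 4) K →ₐ[K] Polynomial K :=
  aeval ![Polynomial.X, 0, 0, 0]

noncomputable def psi5 (K : Type) [CommRing K] : MvPolynomial (Fin 5) K →ₐ[K] Polynomial K :=
  aeval ![0, 0, 0, 0, Polynomial.X]

noncomputable def sig (K : Type) [CommRing K] : Polynomial K →ₐ[K] MvPolynomial (Fin 4) K :=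
  Polynomial.aeval (X 0)

set_option maxHeartbeats 1000000 in
lemma aux_ker {K : Type} [CommRing K] (q : MvPolynomial (Fin 4) K)
    (h : psi4 K q = 0) :
    q ∈ Ideal.span ({X 1, X 2, X 3} : Set (MvPolynomial (Fin 4) K)) := by
  have key : ∀ r : MvPolynomial (Fin 4) K,
      r - sig K (psi4 K r) ∈ Ideal.span ({X 1, X 2, X 3} : Set (MvPolynomial (Fin 4) K)) := by
    intro r
    induction r using MvPolynomial.induction_on with
    | C k => simp [psi4, sig]
    | add p q hp hq =>
        have hcalc : p + q - sig K (psi4 K (p + q))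
            = (p - sig K (psi4 K p)) + (q - sig K (psi4 K q)) := by
          simp only [map_add]; ring
        rw [hcalc]; exact Ideal.add_mem _ hp hq
    | mul_X r i hr =>
        fin_cases i
        · show r * X 0 - sig K (psi4 K (r * X 0)) ∈ _
          have hcalc : r * X 0 - sig K (psi4 K (r * X 0))
              = (r - sig K (psi4 K r)) * X 0 := by
            simp only [map_mul, psi4, sig, aeval_X, Matrix.cons_val_zero, Polynomial.aeval_X]
            ring
          rw [hcalc]; exact Ideal.mul_mem_right _ _ hr
        · show r * X 1 - sig K (psi4 K (r * X 1)) ∈ _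
          have hz : psi4 K (r * X 1) = 0 := by simp [psi4]
          rw [hz, map_zero, sub_zero]
          exact Ideal.mul_mem_left _ r (Ideal.subset_span (by simp))
        · show r * X 2 - sig K (psi4 K (r * X 2)) ∈ _
          have hz : psi4 K (r * X 2) = 0 := by simp [psi4]
          rw [hz, map_zero, sub_zero]
          exact Ideal.mul_mem_left _ r (Ideal.subset_span (by simp))
        · show r * X 3 - sig K (psi4 K (r * X 3)) ∈ _
          have hz : psi4 K (r * X 3) = 0 := by simp [psi4]
          rw [hz, map_zero, sub_zero]
          exact Ideal.mul_mem_left _ r (Ideal.subset_span (by simp))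
  have h2 := key q
  rw [h, map_zero, sub_zero] at h2
  exact h2

set_option maxHeartbeats 4000000 in
set_option synthInstance.maxHeartbeats 1000000 in
/-- with P = (a,b,c,d) in R = K[A,B,C,D,T]/I (variables 0=A, 1=B, 2=C,
3=D, 4=T), R_P is isomorphic to the localization of the hypersurface
K[T,A,B,C]/(A²(A²+Tᵐ) - BC) (variables 0=T, 1=A, 2=B, 3=C) at the prime (a,b,c);
in particular c + a² + tᵐ is invertible in R_P and d = bⁿ(a²+tᵐ)/(c+a²+tᵐ) there. -/
theorem stmt13 (K : Type) [Field K] (p : ℕ) [Fact p.Prime] [CharP K p] (hp : 2 < p)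
    (m n : ℕ) (hm : 0 < m) (hn : 0 < n)
    (I : Ideal (MvPolynomial (Fin 5) K))
    (hI : I = Ideal.span
      { (X 0 ^ 2) * (X 0 ^ 2 + X 4 ^ m) - X 1 * X 2,
        (X 0 ^ 2 + X 4 ^ m) * (X 1 ^ n - X 3) - X 2 * X 3,
        X 1 * (X 1 ^ n - X 3) - (X 0 ^ 2) * X 3 })
    (a b c d t : MvPolynomial (Fin 5) K ⧸ I)
    (ha : a = Ideal.Quotient.mk I (X 0)) (hb : b = Ideal.Quotient.mk I (X 1))
    (hc : c = Ideal.Quotient.mk I (X 2)) (hd : d = Ideal.Quotient.mk I (X 3))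
    (ht : t = Ideal.Quotient.mk I (X 4))
    (P : Ideal (MvPolynomial (Fin 5) K ⧸ I)) (hP : P = Ideal.span {a, b, c, d})
    [P.IsPrime]
    (Jh : Ideal (MvPolynomial (Fin 4) K))
    (hJh : Jh = Ideal.span
      {((X 1 ^ 2) * (X 1 ^ 2 + X 0 ^ m) - X 2 * X 3 : MvPolynomial (Fin 4) K)})
    (P' : Ideal (MvPolynomial (Fin 4) K ⧸ Jh))
    (hP' : P' = Ideal.span {Ideal.Quotient.mk Jh (X 1), Ideal.Quotient.mk Jh (X 2),
      Ideal.Quotient.mk Jh (X 3)})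
    [P'.IsPrime] :
    Nonempty ((Localization.AtPrime P) ≃ₐ[K] (Localization.AtPrime P')) ∧
    IsUnit (algebraMap _ (Localization.AtPrime P) (c + a ^ 2 + t ^ m)) ∧
    algebraMap _ (Localization.AtPrime P) (d * (c + a ^ 2 + t ^ m)) =
      algebraMap _ (Localization.AtPrime P) (b ^ n * (a ^ 2 + t ^ m)) := by
  -- notation
  set α := Ideal.Quotient.mk Jh (X 1) with hα
  set β := Ideal.Quotient.mk Jh (X 2) with hβ
  set γ := Ideal.Quotient.mk Jh (X 3) with hγ
  set τ := Ideal.Quotient.mk Jh (X 0) with hτ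
  -- relations in R5
  have hIg : ∀ g ∈ ({ (X 0 ^ 2) * (X 0 ^ 2 + X 4 ^ m) - X 1 * X 2,
        (X 0 ^ 2 + X 4 ^ m) * (X 1 ^ n - X 3) - X 2 * X 3,
        X 1 * (X 1 ^ n - X 3) - (X 0 ^ 2) * X 3 } : Set (MvPolynomial (Fin 5) K)),
      Ideal.Quotient.mk I g = 0 := by
    intro g hg
    exact Ideal.Quotient.eq_zero_iff_mem.2 (hI ▸ Ideal.subset_span hg)
  have e1 : a ^ 2 * (a ^ 2 + t ^ m) - b * c = 0 := by
    simp only [ha, hb, hc, hd, ht]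
    have := hIg _ (by left; rfl)
    simpa [map_sub, map_mul, map_add, map_pow] using this
  have e2 : (a ^ 2 + t ^ m) * (b ^ n - d) - c * d = 0 := by
    simp only [ha, hb, hc, hd, ht]
    have := hIg _ (by right; left; rfl)
    simpa [map_sub, map_mul, map_add, map_pow] using this
  have e3 : b * (b ^ n - d) - a ^ 2 * d = 0 := by
    simp only [ha, hb, hc, hd, ht]
    have := hIg _ (by right; right; rfl)
    simpa [map_sub, map_mul, map_add, map_pow] using this
  -- relation in S4
  have hS1 : α ^ 2 * (α ^ 2 + τ ^ m) - β * γ = 0 := by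
    simp only [hα, hβ, hγ, hτ]
    have : Ideal.Quotient.mk Jh ((X 1 ^ 2) * (X 1 ^ 2 + X 0 ^ m) - X 2 * X 3) = 0 :=
      Ideal.Quotient.eq_zero_iff_mem.2 (hJh ▸ Ideal.subset_span rfl)
    simpa [map_sub, map_mul, map_add, map_pow] using this
  -- the psi maps kill I, Jh, P, P'
  have hpsiI : ∀ g ∈ I, psi5 K g = 0 := by
    intro g hg
    rw [hI] at hg
    have : g ∈ RingHom.ker (psi5 K) := by
      refine Ideal.span_le.2 ?_ hg
      rintro g' (rfl | rfl | rfl) <;>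
        simp [psi5, SetLike.mem_coe, RingHom.mem_ker, zero_pow hn.ne', zero_pow hm.ne']
    simpa [RingHom.mem_ker] using this
  have hpsiJ : ∀ g ∈ Jh, psi4 K g = 0 := by
    intro g hg
    rw [hJh] at hg
    have : g ∈ RingHom.ker (psi4 K) := by
      refine Ideal.span_le.2 ?_ hg
      rintro g' rfl
      simp [psi4, SetLike.mem_coe, RingHom.mem_ker, zero_pow hn.ne', zero_pow hm.ne']
    simpa [RingHom.mem_ker] using this
  -- lifted psi maps
  let ψR : (MvPolynomial (Fin 5) K ⧸ I) →ₐ[K] Polynomial K := Ideal.Quotient.liftₐ I (psi5 K) hpsiI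
  let ψS : (MvPolynomial (Fin 4) K ⧸ Jh) →ₐ[K] Polynomial K := Ideal.Quotient.liftₐ Jh (psi4 K) hpsiJ
  have hψR : ∀ q : MvPolynomial (Fin 5) K, ψR (Ideal.Quotient.mk I q) = psi5 K q := by
    intro q
    simp [ψR, Ideal.Quotient.liftₐ_apply, Ideal.Quotient.lift_mk]
    rfl
  have hψS : ∀ q : MvPolynomial (Fin 4) K, ψS (Ideal.Quotient.mk Jh q) = psi4 K q := by
    intro q
    simp [ψS, Ideal.Quotient.liftₐ_apply, Ideal.Quotient.lift_mk]
    rfl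
  -- ψR kills P, ψS kills P'
  have hψP : ∀ r ∈ P, ψR r = 0 := by
    intro r hr
    rw [hP] at hr
    have : r ∈ RingHom.ker ψR := by
      refine Ideal.span_le.2 ?_ hr
      rintro r' (rfl | rfl | rfl | rfl) <;>
        simp [SetLike.mem_coe, RingHom.mem_ker, ha, hb, hc, hd, hψR, psi5]
    simpa [RingHom.mem_ker] using this
  have hψP' : ∀ r ∈ P', ψS r = 0 := by
    intro r hr
    rw [hP'] at hr
    have : r ∈ RingHom.ker ψS := by
      refine Ideal.span_le.2 ?_ hr
      rintro r' (rfl | rfl | rfl) <;>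
        simp [SetLike.mem_coe, RingHom.mem_ker, hα, hβ, hγ, hψS, psi4]
    simpa [RingHom.mem_ker] using this
  -- t ∉ P, u₀ ∉ P
  have htP : t ∉ P := by
    intro hmem
    have := hψP t hmem
    rw [ht, hψR] at this
    simp only [psi5, aeval_X] at this
    norm_num at this
  have hu0 : c + a ^ 2 + t ^ m ∉ P := by
    intro hmem
    have hcP : c ∈ P := hP ▸ Ideal.subset_span (by simp)
    have haP : a ∈ P := hP ▸ Ideal.subset_span (by simp)
    have htm : t ^ m ∈ P := by
      have := P.sub_mem hmem (P.add_mem hcP (P.pow_mem_of_mem haP 2 (by norm_num)))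
      simpa using this
    exact htP (‹P.IsPrime›.mem_of_pow_mem m htm)
  -- τ ∉ P', u₀' ∉ P'
  have hτP' : τ ∉ P' := by
    intro hmem
    have := hψP' τ hmem
    rw [hτ, hψS] at this
    simp only [psi4, aeval_X] at this
    norm_num at this
  have hu0' : γ + α ^ 2 + τ ^ m ∉ P' := by
    intro hmem
    have hcP : γ ∈ P' := hP' ▸ Ideal.subset_span (by simp)
    have haP : α ∈ P' := hP' ▸ Ideal.subset_span (by simp)
    have htm : τ ^ m ∈ P' := by
      have := P'.sub_mem hmem (P'.add_mem hcP (P'.pow_mem_of_mem haP 2 (by norm_num)))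
      simpa using this
    exact hτP' (‹P'.IsPrime›.mem_of_pow_mem m htm)
  -- parts 2 and 3
  have part2 : IsUnit (algebraMap _ (Localization.AtPrime P) (c + a ^ 2 + t ^ m)) :=
    (IsLocalization.AtPrime.isUnit_to_map_iff (Localization.AtPrime P) P _).2 hu0
  have e2' : d * (c + a ^ 2 + t ^ m) = b ^ n * (a ^ 2 + t ^ m) := by linear_combination -e2
  have part3 : algebraMap _ (Localization.AtPrime P) (d * (c + a ^ 2 + t ^ m)) =
      algebraMap _ (Localization.AtPrime P) (b ^ n * (a ^ 2 + t ^ m)) := congrArg _ e2'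
  -- the map φ : S4 → R5
  have hφ0kill : ∀ g ∈ Jh,
      (aeval ![t, a, b, c] : MvPolynomial (Fin 4) K →ₐ[K] (MvPolynomial (Fin 5) K ⧸ I)) g = 0 := by
    intro g hg
    rw [hJh] at hg
    have : g ∈ RingHom.ker (aeval ![t, a, b, c] :
        MvPolynomial (Fin 4) K →ₐ[K] (MvPolynomial (Fin 5) K ⧸ I)) := by
      refine Ideal.span_le.2 ?_ hg
      rintro g' rfl
      simp only [SetLike.mem_coe, RingHom.mem_ker, map_sub, map_mul, map_add, map_pow, aeval_X,
        Matrix.cons_val_zero, Matrix.cons_val_one, Matrix.head_cons, vec4_two, vec4_three]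
      linear_combination e1
    simpa [RingHom.mem_ker] using this
  let φ : (MvPolynomial (Fin 4) K ⧸ Jh) →ₐ[K] (MvPolynomial (Fin 5) K ⧸ I) :=
    Ideal.Quotient.liftₐ Jh (aeval ![t, a, b, c]) hφ0kill
  have hφmk : ∀ q : MvPolynomial (Fin 4) K,
      φ (Ideal.Quotient.mk Jh q) = aeval ![t, a, b, c] q := by
    intro q
    simp [φ, Ideal.Quotient.liftₐ_apply, Ideal.Quotient.lift_mk]
    rfl
  have hφα : φ α = a := by rw [hα, hφmk]; simp
  have hφβ : φ β = b := by rw [hβ, hφmk]; simp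
  have hφγ : φ γ = c := by rw [hγ, hφmk]; simp
  have hφτ : φ τ = t := by rw [hτ, hφmk]; simp
  have hψRφ : ∀ s, ψR (φ s) = ψS s := by
    intro s
    obtain ⟨q, rfl⟩ := Ideal.Quotient.mk_surjective s
    rw [hφmk, hψS]
    have hcomp : (ψR.comp (aeval ![t, a, b, c] :
        MvPolynomial (Fin 4) K →ₐ[K] (MvPolynomial (Fin 5) K ⧸ I))) = psi4 K := by
      apply MvPolynomial.algHom_ext
      intro i
      fin_cases i <;>
        simp [ha, hb, hc, ht, hψR, psi5, psi4]
    exact AlgHom.congr_fun hcomp q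
  have hcomapφ : ∀ s, φ s ∈ P → s ∈ P' := by
    intro s hs
    obtain ⟨q, rfl⟩ := Ideal.Quotient.mk_surjective s
    have h0 : psi4 K q = 0 := by
      rw [← hψS q, ← hψRφ]
      exact hψP _ hs
    have hq := aux_ker q h0
    have hmem : Ideal.Quotient.mk Jh q ∈
        Ideal.map (Ideal.Quotient.mk Jh) (Ideal.span ({X 1, X 2, X 3} :
          Set (MvPolynomial (Fin 4) K))) := Ideal.mem_map_of_mem _ hq
    rw [Ideal.map_span] at hmem
    rw [hP']
    simpa [Set.image_insert_eq, hα, hβ, hγ] using hmem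
  have hφP' : ∀ z ∈ P', φ z ∈ P := by
    intro z hz
    rw [hP'] at hz
    have : z ∈ Ideal.comap φ P := by
      refine Ideal.span_le.2 ?_ hz
      rintro z' (rfl | rfl | rfl) <;>
        simp only [SetLike.mem_coe, Ideal.mem_comap, ← hα, ← hβ, ← hγ, hφα, hφβ, hφγ] <;>
        exact hP ▸ Ideal.subset_span (by simp)
    exact this
  -- canonical algebra maps into the localizations
  let ι5 : (MvPolynomial (Fin 5) K ⧸ I) →ₐ[K] Localization.AtPrime P :=
    IsScalarTower.toAlgHom K _ _
  let ι4 : (MvPolynomial (Fin 4) K ⧸ Jh) →ₐ[K] Localization.AtPrime P' :=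
    IsScalarTower.toAlgHom K _ _
  -- the map ḡ : S4 → RP
  have hg0kill : ∀ g ∈ Jh, (ι5.comp (aeval ![t, a, b, c])) g = 0 := by
    intro g hg
    simp only [AlgHom.comp_apply, hφ0kill g hg, map_zero]
  let gbar : (MvPolynomial (Fin 4) K ⧸ Jh) →ₐ[K] Localization.AtPrime P :=
    Ideal.Quotient.liftₐ Jh (ι5.comp (aeval ![t, a, b, c])) hg0kill
  have hgbar : ∀ s, gbar s = algebraMap _ (Localization.AtPrime P) (φ s) := by
    intro s
    obtain ⟨q, rfl⟩ := Ideal.Quotient.mk_surjective s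
    rw [hφmk]
    simp [gbar, Ideal.Quotient.liftₐ_apply, Ideal.Quotient.lift_mk, ι5]
    erw [Ideal.Quotient.lift_mk]
    simp [ι5]
  have hunits_g : ∀ y : P'.primeCompl, IsUnit (gbar y) := by
    intro y
    rw [hgbar]
    refine (IsLocalization.AtPrime.isUnit_to_map_iff (Localization.AtPrime P) P _).2 ?_
    exact fun h => y.2 (hcomapφ _ h)
  let gg : Localization.AtPrime P' →ₐ[K] Localization.AtPrime P :=
    IsLocalization.liftAlgHom (M := P'.primeCompl) (S := Localization.AtPrime P') hunits_g
  have hgg : ∀ s, gg (algebraMap _ (Localization.AtPrime P') s)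
      = algebraMap _ (Localization.AtPrime P) (φ s) := by
    intro s
    rw [← hgbar]
    simp [gg, IsLocalization.liftAlgHom_apply, IsLocalization.lift_eq]
  -- the unit in SP and δ
  have hufS : IsUnit (algebraMap _ (Localization.AtPrime P') (γ + α ^ 2 + τ ^ m)) :=
    (IsLocalization.AtPrime.isUnit_to_map_iff (Localization.AtPrime P') P' _).2 hu0'
  let δ : Localization.AtPrime P' :=
    algebraMap _ (Localization.AtPrime P') (β ^ n * (α ^ 2 + τ ^ m)) * ↑hufS.unit⁻¹
  have hδu : δ * algebraMap _ (Localization.AtPrime P') (γ + α ^ 2 + τ ^ m)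
      = algebraMap _ (Localization.AtPrime P') (β ^ n * (α ^ 2 + τ ^ m)) := by
    rw [show (algebraMap _ (Localization.AtPrime P') (γ + α ^ 2 + τ ^ m)) = ↑hufS.unit from
      hufS.unit_spec.symm]
    exact Units.inv_mul_cancel_right _ _
  -- abbreviations for images in SP
  have hfS1 : (ι4 α) ^ 2 * ((ι4 α) ^ 2 + (ι4 τ) ^ m) - (ι4 β) * (ι4 γ) = 0 := by
    have := congrArg (algebraMap _ (Localization.AtPrime P')) hS1
    simpa [map_sub, map_mul, map_add, map_pow, ι4] using this
  have hδu' : δ * ((ι4 γ) + (ι4 α) ^ 2 + (ι4 τ) ^ m) = (ι4 β) ^ n * ((ι4 α) ^ 2 + (ι4 τ) ^ m) := by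
    have := hδu
    simpa [map_mul, map_add, map_pow, ι4] using this
  -- f0 kills I
  haveI : IsRightCancelAdd (Localization.AtPrime P') := by
    exact @AddRightCancelSemigroup.toIsRightCancelAdd _ (inferInstance : AddRightCancelSemigroup (Localization.AtPrime P'))
  have hf0kill : ∀ g ∈ I,
      (aeval ![ι4 α, ι4 β, ι4 γ, δ, ι4 τ] : MvPolynomial (Fin 5) K →ₐ[K]
        Localization.AtPrime P') g = 0 := by
    intro g hg
    rw [hI] at hg
    have : g ∈ RingHom.ker (aeval ![ι4 α, ι4 β, ι4 γ, δ, ι4 τ] :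
        MvPolynomial (Fin 5) K →ₐ[K] Localization.AtPrime P') := by
      refine Ideal.span_le.2 ?_ hg
      rintro g' (rfl | rfl | rfl) <;>
        simp only [SetLike.mem_coe, RingHom.mem_ker, map_sub, map_mul, map_add, map_pow, aeval_X,
          Matrix.cons_val_zero, Matrix.cons_val_one, Matrix.head_cons, vec5_two, vec5_three,
          vec5_four]
      · linear_combination hfS1
      · linear_combination -hδu'
      · have hufS' : IsUnit ((ι4 γ) + (ι4 α) ^ 2 + (ι4 τ) ^ m) := by
          have := hufS
          simpa [map_add, map_pow, ι4] using this
        have h3 : ((ι4 β) * ((ι4 β) ^ n - δ) - (ι4 α) ^ 2 * δ)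
            * ((ι4 γ) + (ι4 α) ^ 2 + (ι4 τ) ^ m) = 0 := by
          linear_combination (-(ι4 β) - (ι4 α) ^ 2) * hδu' + (-((ι4 β) ^ n)) * hfS1
        rw [mul_comm] at h3
        exact (hufS'.mul_right_eq_zero).1 h3
    simpa [RingHom.mem_ker] using this
  let fbar : (MvPolynomial (Fin 5) K ⧸ I) →ₐ[K] Localization.AtPrime P' :=
    Ideal.Quotient.liftₐ I (aeval ![ι4 α, ι4 β, ι4 γ, δ, ι4 τ]) hf0kill
  have hfbar : ∀ q : MvPolynomial (Fin 5) K,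
      fbar (Ideal.Quotient.mk I q) = aeval ![ι4 α, ι4 β, ι4 γ, δ, ι4 τ] q := by
    intro q
    simp [fbar, Ideal.Quotient.liftₐ_apply, Ideal.Quotient.lift_mk]
    rfl
  have hfa : fbar a = ι4 α := by rw [ha, hfbar]; simp
  have hfb : fbar b = ι4 β := by rw [hb, hfbar]; simp
  have hfc : fbar c = ι4 γ := by rw [hc, hfbar]; simp
  have hfd : fbar d = δ := by rw [hd, hfbar]; simp
  have hft : fbar t = ι4 τ := by rw [ht, hfbar]; simp
  -- gg ∘ fbar = algebraMap
  have hggfbar : ∀ r, gg (fbar r) = algebraMap _ (Localization.AtPrime P) r := by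
    have key : gg.comp fbar = ι5 := by
      apply Ideal.Quotient.algHom_ext
      apply MvPolynomial.algHom_ext
      intro i
      fin_cases i <;>
        simp only [AlgHom.comp_apply, Ideal.Quotient.mkₐ_eq_mk]
      · show gg (fbar (Ideal.Quotient.mk I (X 0))) = ι5 (Ideal.Quotient.mk I (X 0))
        rw [← ha, hfa]
        show gg (ι4 α) = algebraMap _ _ a
        rw [show ι4 α = algebraMap _ (Localization.AtPrime P') α from rfl, hgg, hφα]
      · show gg (fbar (Ideal.Quotient.mk I (X 1))) = ι5 (Ideal.Quotient.mk I (X 1))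
        rw [← hb, hfb]
        show gg (ι4 β) = algebraMap _ _ b
        rw [show ι4 β = algebraMap _ (Localization.AtPrime P') β from rfl, hgg, hφβ]
      · show gg (fbar (Ideal.Quotient.mk I (X 2))) = ι5 (Ideal.Quotient.mk I (X 2))
        rw [← hc, hfc]
        show gg (ι4 γ) = algebraMap _ _ c
        rw [show ι4 γ = algebraMap _ (Localization.AtPrime P') γ from rfl, hgg, hφγ]
      · show gg (fbar (Ideal.Quotient.mk I (X 3))) = ι5 (Ideal.Quotient.mk I (X 3))
        rw [← hd, hfd]
        show gg δ = algebraMap _ _ d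
        have hφu : φ (γ + α ^ 2 + τ ^ m) = c + a ^ 2 + t ^ m := by
          simp [map_add, map_pow, hφγ, hφα, hφτ]
        have hcalc : gg δ * algebraMap _ (Localization.AtPrime P) (c + a ^ 2 + t ^ m)
            = algebraMap _ (Localization.AtPrime P) d
              * algebraMap _ (Localization.AtPrime P) (c + a ^ 2 + t ^ m) := by
          have h1 : algebraMap _ (Localization.AtPrime P) (c + a ^ 2 + t ^ m)
              = gg (algebraMap _ (Localization.AtPrime P') (γ + α ^ 2 + τ ^ m)) := by
            rw [hgg, hφu]
          have hφbn : φ (β ^ n * (α ^ 2 + τ ^ m)) = b ^ n * (a ^ 2 + t ^ m) := by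
            simp [map_mul, map_add, map_pow, hφβ, hφα, hφτ]
          calc gg δ * algebraMap _ (Localization.AtPrime P) (c + a ^ 2 + t ^ m)
              = gg (δ * algebraMap _ (Localization.AtPrime P') (γ + α ^ 2 + τ ^ m)) := by
                rw [h1]; exact (map_mul gg _ _).symm
            _ = gg (algebraMap _ (Localization.AtPrime P') (β ^ n * (α ^ 2 + τ ^ m))) := by
                rw [hδu]
            _ = algebraMap _ (Localization.AtPrime P) (φ (β ^ n * (α ^ 2 + τ ^ m))) := hgg _
            _ = algebraMap _ (Localization.AtPrime P) (d * (c + a ^ 2 + t ^ m)) := by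
                rw [hφbn, e2']
            _ = algebraMap _ (Localization.AtPrime P) d
                * algebraMap _ (Localization.AtPrime P) (c + a ^ 2 + t ^ m) := map_mul _ _ _
        exact part2.mul_right_cancel hcalc
      · show gg (fbar (Ideal.Quotient.mk I (X 4))) = ι5 (Ideal.Quotient.mk I (X 4))
        rw [← ht, hft]
        show gg (ι4 τ) = algebraMap _ _ t
        rw [show ι4 τ = algebraMap _ (Localization.AtPrime P') τ from rfl, hgg, hφτ]
    intro r
    exact AlgHom.congr_fun key r
  -- fbar sends the complement of P to units
  have hunits_f : ∀ y : P.primeCompl, IsUnit (fbar y) := by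
    intro y
    by_contra hnu
    have hmem : fbar ↑y ∈ IsLocalRing.maximalIdeal (Localization.AtPrime P') := hnu
    rw [← Localization.AtPrime.map_eq_maximalIdeal,
      IsLocalization.mem_map_algebraMap_iff P'.primeCompl] at hmem
    obtain ⟨⟨x, s⟩, hx⟩ := hmem
    have hgx := congrArg gg hx
    rw [map_mul, hggfbar, hgg, hgg] at hgx
    have hux : IsUnit (algebraMap _ (Localization.AtPrime P) (φ ↑x)) := by
      rw [← hgx]
      exact ((IsLocalization.AtPrime.isUnit_to_map_iff (Localization.AtPrime P) P _).2 y.2).mul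
        ((IsLocalization.AtPrime.isUnit_to_map_iff (Localization.AtPrime P) P _).2
          (fun h => s.2 (hcomapφ _ h)))
    have : (φ ↑x) ∈ P := hφP' _ x.2
    exact ((IsLocalization.AtPrime.isUnit_to_map_iff (Localization.AtPrime P) P _).1 hux) this
  let ff : Localization.AtPrime P →ₐ[K] Localization.AtPrime P' :=
    IsLocalization.liftAlgHom (M := P.primeCompl) (S := Localization.AtPrime P) hunits_f
  have hff : ∀ r, ff (algebraMap _ (Localization.AtPrime P) r) = fbar r := by
    intro r
    simp [ff, IsLocalization.liftAlgHom_apply, IsLocalization.lift_eq]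
  -- fbar ∘ φ = algebraMap
  have hfbarφ : ∀ s, fbar (φ s) = algebraMap _ (Localization.AtPrime P') s := by
    have key : fbar.comp φ = ι4 := by
      apply Ideal.Quotient.algHom_ext
      apply MvPolynomial.algHom_ext
      intro i
      fin_cases i <;>
        simp only [AlgHom.comp_apply, Ideal.Quotient.mkₐ_eq_mk]
      · show fbar (φ (Ideal.Quotient.mk Jh (X 0))) = ι4 (Ideal.Quotient.mk Jh (X 0))
        rw [← hτ, hφτ, hft]
      · show fbar (φ (Ideal.Quotient.mk Jh (X 1))) = ι4 (Ideal.Quotient.mk Jh (X 1))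
        rw [← hα, hφα, hfa]
      · show fbar (φ (Ideal.Quotient.mk Jh (X 2))) = ι4 (Ideal.Quotient.mk Jh (X 2))
        rw [← hβ, hφβ, hfb]
      · show fbar (φ (Ideal.Quotient.mk Jh (X 3))) = ι4 (Ideal.Quotient.mk Jh (X 3))
        rw [← hγ, hφγ, hfc]
    intro s
    exact AlgHom.congr_fun key s
  -- the two maps are mutually inverse
  have hgf : ∀ z, gg (ff z) = z := by
    have hcomp : gg.toRingHom.comp ff.toRingHom
        = RingHom.id (Localization.AtPrime P) := by
      apply IsLocalization.ringHom_ext P.primeCompl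
      refine RingHom.ext fun r => ?_
      simp only [RingHom.comp_apply, RingHom.id_apply, RingHom.coe_coe]
      rw [show (gg.toRingHom) ((ff.toRingHom) (algebraMap _ (Localization.AtPrime P) r))
        = gg (ff (algebraMap _ (Localization.AtPrime P) r)) from rfl, hff, hggfbar]
    exact fun z => RingHom.congr_fun hcomp z
  have hfg : ∀ z, ff (gg z) = z := by
    have hcomp : ff.toRingHom.comp gg.toRingHom
        = RingHom.id (Localization.AtPrime P') := by
      apply IsLocalization.ringHom_ext P'.primeCompl
      refine RingHom.ext fun s => ?_
      simp only [RingHom.comp_apply, RingHom.id_apply, RingHom.coe_coe]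
      rw [show (ff.toRingHom) ((gg.toRingHom) (algebraMap _ (Localization.AtPrime P') s))
        = ff (gg (algebraMap _ (Localization.AtPrime P') s)) from rfl, hgg, hff, hfbarφ]
    exact fun z => RingHom.congr_fun hcomp z
  exact ⟨⟨AlgEquiv.ofAlgHom ff gg (AlgHom.ext hfg) (AlgHom.ext hgf)⟩, part2, part3⟩
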